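/- The set of Baxter permutations of size n is closed under inversion: if π is a Baxter permutation of {1,...,n}, then π⁻¹ is also a Baxter permutation. -/

import Mathlib

def IsBaxter {n : ℕ} (π : Equiv.Perm (Fin n)) : Prop :=
  ¬ ∃ i j k : Fin n, ∃ hj : (j : ℕ) + 1 < n,
    i < j ∧ j < k ∧
      ((π ⟨(j : ℕ) + 1, hj⟩ < π i ∧ π i < π k ∧ π k < π j) ∨
       (π j < π k ∧ π k < π i ∧ π i < π ⟨(j : ℕ) + 1, hj⟩))

lemma baxter_cross (P : ℕ → Prop) (b c : ℕ) (hbc : b < c) (hb : P b) (hc : ¬ P c) :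
    ∃ p, b ≤ p ∧ p < c ∧ P p ∧ ¬ P (p + 1) := by
  by_contra hcon
  push_neg at hcon
  have key : ∀ d, b ≤ d → d ≤ c → P d := by
    intro d
    induction d with
    | zero => intro h1 _; exact Nat.le_zero.mp h1 ▸ hb
    | succ d ih =>
      intro h1 h2
      rcases Nat.eq_or_lt_of_le h1 with he | hl
      · exact he ▸ hb
      · have hbd : b ≤ d := Nat.lt_succ_iff.mp hl
        exact hcon d hbd (by omega) (ih hbd (by omega))
  exact hc (key c hbc.le le_rfl)

/-- From a classical 2413-type occurrence with a value adjacency, produce a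
position-adjacent forbidden pattern (second disjunct). -/
lemma baxter_key1 {n : ℕ} (π : Equiv.Perm (Fin n)) (a b c d : Fin n)
    (hab : a < b) (hbc : b < c) (hcd : c < d)
    (h1 : π b < π d) (h2 : ((π d : Fin n) : ℕ) + 1 = ((π a : Fin n) : ℕ))
    (h3 : ((π a : Fin n) : ℕ) ≤ ((π c : Fin n) : ℕ))
    (hB : IsBaxter π) : False := by
  have hacne : π a ≠ π c := fun he => absurd (π.injective he) (ne_of_lt (hab.trans hbc))
  have h3' : π a < π c :=
    Fin.lt_def.mpr (lt_of_le_of_ne h3 (fun hv => hacne (Fin.ext hv)))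
  have hda : π d < π a := Fin.lt_def.mpr (by omega)
  have habv : (a : ℕ) < b := Fin.lt_def.mp hab
  have hbcv : (b : ℕ) < c := Fin.lt_def.mp hbc
  have hcdv : (c : ℕ) < d := Fin.lt_def.mp hcd
  obtain ⟨p, hbp, hpc, ⟨hpn, hPp⟩, hnP⟩ :=
    baxter_cross (fun q => ∃ hq : q < n, π ⟨q, hq⟩ < π a) b c hbcv
      ⟨b.isLt, by rw [Fin.eta]; exact h1.trans hda⟩
      (by rintro ⟨hq, hlt⟩; rw [Fin.eta] at hlt; exact lt_asymm h3' hlt)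
  have hp1n : p + 1 < n := by have := c.isLt; omega
  -- π a < π (p+1)
  have hap1 : π a < π ⟨p + 1, hp1n⟩ := by
    have hge : π a ≤ π ⟨p + 1, hp1n⟩ := le_of_not_gt (fun hl => hnP ⟨hp1n, hl⟩)
    refine lt_of_le_of_ne hge (fun he => ?_)
    have := π.injective he
    rw [Fin.ext_iff] at this
    simp only [Fin.val_mk] at this
    omega
  -- π p < π d
  have hpd : π ⟨p, hpn⟩ < π d := by
    have hne : π ⟨p, hpn⟩ ≠ π d := by
      intro he
      have := π.injective he
      rw [Fin.ext_iff] at this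
      simp only [Fin.val_mk] at this
      omega
    have hvne : ((π ⟨p, hpn⟩ : Fin n) : ℕ) ≠ ((π d : Fin n) : ℕ) :=
      fun hv => hne (Fin.ext hv)
    have hlt := Fin.lt_def.mp hPp
    exact Fin.lt_def.mpr (by omega)
  exact hB ⟨a, ⟨p, hpn⟩, d, hp1n, Fin.lt_def.mpr (by simp only [Fin.val_mk]; omega),
    Fin.lt_def.mpr (by simp only [Fin.val_mk]; omega), Or.inr ⟨hpd, hda, hap1⟩⟩

/-- From a classical 3142-type occurrence with a value adjacency, produce a
position-adjacent forbidden pattern (first disjunct). -/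
lemma baxter_key2 {n : ℕ} (π : Equiv.Perm (Fin n)) (a b c d : Fin n)
    (hab : a < b) (hbc : b < c) (hcd : c < d)
    (h1 : π c < π a) (h2 : ((π a : Fin n) : ℕ) + 1 = ((π d : Fin n) : ℕ))
    (h3 : ((π d : Fin n) : ℕ) ≤ ((π b : Fin n) : ℕ))
    (hB : IsBaxter π) : False := by
  have hdbne : π d ≠ π b := fun he => absurd (π.injective he) (ne_of_gt (hbc.trans hcd))
  have h3' : π d < π b :=
    Fin.lt_def.mpr (lt_of_le_of_ne h3 (fun hv => hdbne (Fin.ext hv)))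
  have had : π a < π d := Fin.lt_def.mpr (by omega)
  have habv : (a : ℕ) < b := Fin.lt_def.mp hab
  have hbcv : (b : ℕ) < c := Fin.lt_def.mp hbc
  have hcdv : (c : ℕ) < d := Fin.lt_def.mp hcd
  obtain ⟨p, hbp, hpc, ⟨hpn, hPp⟩, hnP⟩ :=
    baxter_cross (fun q => ∃ hq : q < n, π d < π ⟨q, hq⟩) b c hbcv
      ⟨b.isLt, by rw [Fin.eta]; exact h3'⟩
      (by rintro ⟨hq, hlt⟩; rw [Fin.eta] at hlt; exact lt_asymm (h1.trans had) hlt)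
  have hp1n : p + 1 < n := by have := c.isLt; omega
  -- π (p+1) < π d
  have hp1d : π ⟨p + 1, hp1n⟩ < π d := by
    have hge : π ⟨p + 1, hp1n⟩ ≤ π d := le_of_not_gt (fun hl => hnP ⟨hp1n, hl⟩)
    refine lt_of_le_of_ne hge (fun he => ?_)
    have := π.injective he
    rw [Fin.ext_iff] at this
    simp only [Fin.val_mk] at this
    omega
  -- π (p+1) < π a
  have hp1a : π ⟨p + 1, hp1n⟩ < π a := by
    have hne : π ⟨p + 1, hp1n⟩ ≠ π a := by
      intro he
      have := π.injective he
      rw [Fin.ext_iff] at this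
      simp only [Fin.val_mk] at this
      omega
    have hvne : ((π ⟨p + 1, hp1n⟩ : Fin n) : ℕ) ≠ ((π a : Fin n) : ℕ) :=
      fun hv => hne (Fin.ext hv)
    have hlt := Fin.lt_def.mp hp1d
    exact Fin.lt_def.mpr (by omega)
  exact hB ⟨a, ⟨p, hpn⟩, d, hp1n, Fin.lt_def.mpr (by simp only [Fin.val_mk]; omega),
    Fin.lt_def.mpr (by simp only [Fin.val_mk]; omega), Or.inl ⟨hp1a, had, hPp⟩⟩

theorem baxter_closed_under_inversion {n : ℕ} (π : Equiv.Perm (Fin n))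
    (h : IsBaxter π) : IsBaxter π⁻¹ := by
  rintro ⟨i, j, k, hj, hij, hjk, hcase⟩
  have hijv : (i : ℕ) < j := Fin.lt_def.mp hij
  have hjkv : (j : ℕ) < k := Fin.lt_def.mp hjk
  rcases hcase with ⟨h1, h2, h3⟩ | ⟨h1, h2, h3⟩
  · refine baxter_key1 π (π⁻¹ ⟨(j : ℕ) + 1, hj⟩) (π⁻¹ i) (π⁻¹ k) (π⁻¹ j)
      h1 h2 h3 ?_ ?_ ?_ h
    · simpa using hij
    · simp only [Equiv.Perm.coe_inv, Equiv.apply_symm_apply]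
    · simp only [Equiv.Perm.coe_inv, Equiv.apply_symm_apply]
      omega
  · refine baxter_key2 π (π⁻¹ j) (π⁻¹ k) (π⁻¹ i) (π⁻¹ ⟨(j : ℕ) + 1, hj⟩)
      h1 h2 h3 ?_ ?_ ?_ h
    · simpa using hij
    · simp only [Equiv.Perm.coe_inv, Equiv.apply_symm_apply]
    · simp only [Equiv.Perm.coe_inv, Equiv.apply_symm_apply]
      omega
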